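/- Coherent flattening via embezzlement, first inequality: Let δ ∈ (0,1/15), γ ∈ (0,1), and d a positive integer such that d/γ is an integer. Let ρ = ∑_{c ∈ I} q(c) |v_c⟩⟨v_c| be a density matrix on ℂ^d, where I is a finite index set, {|v_c⟩}_{c∈I} is an orthonormal family, every q(c) > 0, and every b(c) := q(c)·d/γ is a positive integer. Let a := (d/γ)·max_{c∈I} q(c) and let n, N be integers with (n:ℝ) ≥ (a:ℝ)^{1/δ} and N ≥ n. For each c ∈ I, let W_{b(c)} be a unitary on ℂ^N ⊗ ℂ^a satisfying W_{b(c)}(e_i ⊗ e_0) = e_{⌊i/b(c)⌋} ⊗ e_{(i mod b(c))} for all 0 ≤ i ≤ N−1, and set W := ∑_{c∈I} |v_c⟩⟨v_c| ⊗ W_{b(c)} on ℂ^d ⊗ ℂ^N ⊗ ℂ^a. Then W (ρ ⊗ ξ_{a:n} ⊗ e_0 e_0*) W* ≼ (1 + 15δ) · (γ/d) ∑_{c∈I} |v_c⟩⟨v_c| ⊗ ξ_{1:n} ⊗ (∑_{e=0}^{b(c)−1} e_e e_e*) in the Loewner order. -/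

import Mathlib

open Matrix Kronecker
open scoped ComplexOrder Classical

/-- A density matrix: a positive semidefinite matrix of trace 1. -/
def IsDensityMatrix {n : Type*} [Fintype n] (ρ : Matrix n n ℂ) : Prop :=
  ρ.PosSemidef ∧ ρ.trace = 1

/-- The partial harmonic sum `S(a,n) = ∑_{i=a}^{n} 1/i`. -/
noncomputable def harmSum (a n : ℕ) : ℝ := ∑ i ∈ Finset.Icc a n, (1 : ℝ) / i

/-- The embezzling state `ξ_{a:n}` on `ℂ^N`: the diagonal (density) matrix whose `(i,i)`
entry is `1/(i·S(a,n))` for `a ≤ i ≤ n` and `0` otherwise. -/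
noncomputable def embezState (a n N : ℕ) : Matrix (Fin N) (Fin N) ℂ :=
  Matrix.of fun i j =>
    if i = j ∧ a ≤ (i : ℕ) ∧ (i : ℕ) ≤ n then
      ((1 / (((i : ℕ) : ℝ) * harmSum a n) : ℝ) : ℂ)
    else 0

/-! ### Auxiliary lemmas -/

section Aux

lemma harmSum_eq_harmonic (m : ℕ) : harmSum 1 m = (harmonic m : ℝ) := by
  rw [harmSum, harmonic_eq_sum_Icc]
  push_cast
  simp [one_div]

lemma harmSum_split (a n : ℕ) (h1 : 1 ≤ a) (h2 : a ≤ n + 1) :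
    harmSum 1 n = (harmonic (a-1) : ℝ) + harmSum a n := by
  have e1 : Finset.Icc 1 n = Finset.Ioc 0 n := by rw [← Finset.Icc_add_one_left_eq_Ioc, zero_add]
  have e2 : Finset.Icc a n = Finset.Ioc (a-1) n := by
    rw [← Finset.Icc_add_one_left_eq_Ioc, Nat.sub_add_cancel h1]
  have e3 : harmonic (a-1) = ∑ i ∈ Finset.Ioc 0 (a-1), (1:ℚ)/i := by
    rw [harmonic_eq_sum_Icc, ← Finset.Icc_add_one_left_eq_Ioc]; simp [one_div]
  rw [harmSum, harmSum, e1, e2, e3]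
  push_cast
  rw [← Finset.sum_Ioc_consecutive _ (Nat.zero_le (a-1)) (by omega : a - 1 ≤ n)]

lemma harmSum_pos {a n : ℕ} (h1 : 1 ≤ a) (h : a ≤ n) : 0 < harmSum a n := by
  apply Finset.sum_pos
  · intro i hi
    simp only [Finset.mem_Icc] at hi
    have : 0 < (i:ℝ) := by exact_mod_cast Nat.lt_of_lt_of_le Nat.zero_lt_one (le_trans h1 hi.1)
    positivity
  · exact ⟨a, Finset.mem_Icc.mpr ⟨le_refl _, h⟩⟩

lemma harm_key {δ : ℝ} (hδ0 : 0 < δ) (hδ : δ < 1/15) {a n : ℕ} (ha1 : 1 ≤ a)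
    (han : a ≤ n) (hn : (a:ℝ) ^ ((1:ℝ)/δ) ≤ n) :
    harmSum 1 n ≤ (1 + 15*δ) * harmSum a n := by
  have hSa : 0 < harmSum a n := harmSum_pos ha1 han
  rcases eq_or_lt_of_le ha1 with h1 | h2
  · subst h1; nlinarith
  have ha2 : 2 ≤ a := h2
  have hsplit := harmSum_split a n ha1 (by omega)
  have hHa : (harmonic (a-1) : ℝ) ≤ 1 + Real.log a := by
    refine (harmonic_le_one_add_log (a-1)).trans ?_
    have h0 : (0:ℝ) < ((a-1 : ℕ):ℝ) := by exact_mod_cast (by omega : (0:ℕ) < a - 1)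
    have : Real.log ((a-1:ℕ):ℝ) ≤ Real.log a :=
      Real.log_le_log h0 (by exact_mod_cast (by omega : a - 1 ≤ a))
    linarith
  have hn1 : (1:ℝ) ≤ (n:ℝ) := by exact_mod_cast le_trans ha1 han
  have hHn : Real.log ((n:ℝ)+1) ≤ (harmonic n : ℝ) := by
    have := log_add_one_le_harmonic n
    push_cast at this
    linarith
  have hlogn : Real.log n ≤ Real.log ((n:ℝ)+1) :=
    Real.log_le_log (by linarith) (by linarith)
  have hS1 : harmSum 1 n = (harmonic n : ℝ) := harmSum_eq_harmonic n
  have ha0 : (0:ℝ) < (a:ℝ) := by exact_mod_cast lt_of_lt_of_le Nat.zero_lt_one ha1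
  have hT : (1/δ) * Real.log a ≤ Real.log n := by
    have := Real.log_le_log (Real.rpow_pos_of_pos ha0 _) hn
    rwa [Real.log_rpow ha0] at this
  have hL2 : Real.log 2 ≤ Real.log a :=
    Real.log_le_log (by norm_num) (by exact_mod_cast ha2)
  have hlog2 : (0.6931471803 : ℝ) < Real.log 2 := Real.log_two_gt_d9
  have key : (harmonic (a-1) : ℝ) ≤ 15*δ * harmSum a n := by
    have hSa' : Real.log ((n:ℝ)+1) - (1 + Real.log a) ≤ harmSum a n := by
      have : harmSum a n = (harmonic n : ℝ) - (harmonic (a-1) : ℝ) := by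
        rw [← hS1]; linarith
      rw [this]; linarith
    have hL : (0.6931471803 : ℝ) < Real.log a := lt_of_lt_of_le hlog2 hL2
    have hTn : (1/δ) * Real.log a ≤ Real.log ((n:ℝ)+1) := le_trans hT hlogn
    have hd15 : 15*δ < 1 := by linarith
    have expand : 15*δ * ((1/δ) * Real.log a - (1 + Real.log a))
        ≤ 15*δ * harmSum a n := by
      apply mul_le_mul_of_nonneg_left _ (by linarith)
      linarith
    have : 15*δ * ((1/δ) * Real.log a) = 15 * Real.log a := by
      field_simp
    nlinarith [mul_pos (by linarith : (0:ℝ) < 15*δ) (by linarith : (0:ℝ) < Real.log a)]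
  linarith [hsplit]

lemma kron_conjT {l m n p : Type*} [Fintype m] [Fintype p]
    (A : Matrix l m ℂ) (B : Matrix n p ℂ) : (A ⊗ₖ B)ᴴ = Aᴴ ⊗ₖ Bᴴ := by
  ext ⟨i,j⟩ ⟨k,l⟩
  simp [conjTranspose_apply, kroneckerMap_apply, _root_.map_mul]

lemma posSemidef_kron {m n : Type*} [Fintype m] [Fintype n] [DecidableEq m] [DecidableEq n]
    {A : Matrix m m ℂ} {B : Matrix n n ℂ} (hA : A.PosSemidef) (hB : B.PosSemidef) :
    (A ⊗ₖ B).PosSemidef := by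
  exact hA.kronecker hB

lemma posSemidef_vecMulVec {m : Type*} [Fintype m] (v : m → ℂ) :
    (vecMulVec v (star v)).PosSemidef := by
  rw [Matrix.posSemidef_iff_dotProduct_mulVec]
  constructor
  · ext i j; simp [conjTranspose_apply, vecMulVec_apply, mul_comm]
  · intro x
    have h : (vecMulVec v (star v)).mulVec x = fun i => v i * (∑ j, star (v j) * x j) := by
      ext i; simp [mulVec, dotProduct, vecMulVec_apply, Finset.mul_sum, mul_assoc]
    rw [h]
    have : star x ⬝ᵥ (fun i => v i * (∑ j, star (v j) * x j))
        = star (∑ j, star (v j) * x j) * (∑ j, star (v j) * x j) := by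
      simp only [dotProduct, Pi.star_apply, star_sum, star_mul', star_star, Finset.sum_mul,
        Finset.mul_sum]
      rw [Finset.sum_comm]
      congr 1; ext i; congr 1; ext j; ring
    rw [this]
    exact star_mul_self_nonneg _

lemma proj_mul {I : Type*} [Fintype I] [DecidableEq I] {d : ℕ} (v : I → Fin d → ℂ)
    (hv : ∀ c c' : I, ∑ i, (starRingEnd ℂ) (v c i) * v c' i = if c = c' then 1 else 0)
    (c c' : I) :
    vecMulVec (v c) (star (v c)) * vecMulVec (v c') (star (v c')) =
      if c = c' then vecMulVec (v c) (star (v c)) else 0 := by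
  ext i j
  simp only [mul_apply, vecMulVec_apply, Pi.star_apply]
  have h : ∀ k, v c i * star (v c k) * (v c' k * star (v c' j))
      = (v c i * star (v c' j)) * (star (v c k) * v c' k) := fun k => by ring
  simp_rw [h, ← Finset.mul_sum]
  have := hv c c'
  simp only [RCLike.star_def] at *
  rw [this]
  by_cases h' : c = c'
  · subst h'; simp [vecMulVec_apply]
  · simp [h']

lemma proj_herm {I : Type*} {d : ℕ} (v : I → Fin d → ℂ) (c : I) :
    (vecMulVec (v c) (star (v c)))ᴴ = vecMulVec (v c) (star (v c)) := by
  ext i j; simp [conjTranspose_apply, vecMulVec_apply, mul_comm]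

lemma W_rho_W {I : Type*} [Fintype I] [DecidableEq I] {d : ℕ}
    {M : Type*} [Fintype M] [DecidableEq M] (v : I → Fin d → ℂ)
    (hv : ∀ c c' : I, ∑ i, (starRingEnd ℂ) (v c i) * v c' i = if c = c' then 1 else 0)
    (q : I → ℝ) (Wb : I → Matrix M M ℂ) (X : Matrix M M ℂ) :
    (∑ c, vecMulVec (v c) (star (v c)) ⊗ₖ Wb c)
      * ((∑ c, ((q c : ℝ) : ℂ) • vecMulVec (v c) (star (v c))) ⊗ₖ X)
      * (∑ c, vecMulVec (v c) (star (v c)) ⊗ₖ Wb c)ᴴ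
    = ∑ c, ((q c : ℝ) : ℂ) • (vecMulVec (v c) (star (v c)) ⊗ₖ (Wb c * X * (Wb c)ᴴ)) := by
  set P : I → Matrix (Fin d) (Fin d) ℂ := fun c => vecMulVec (v c) (star (v c)) with hP
  have hmul := proj_mul v hv
  have step1 : (∑ c, ((q c : ℝ) : ℂ) • P c) ⊗ₖ X = ∑ c, ((q c:ℝ):ℂ) • (P c ⊗ₖ X) := by
    ext ⟨i,k⟩ ⟨j,l⟩
    simp [kroneckerMap_apply, Matrix.sum_apply, Matrix.smul_apply, smul_eq_mul,
      Finset.sum_mul, mul_assoc]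
  have step2 : (∑ c, P c ⊗ₖ Wb c) * ((∑ c, ((q c : ℝ) : ℂ) • P c) ⊗ₖ X)
      = ∑ c, ((q c:ℝ):ℂ) • (P c ⊗ₖ (Wb c * X)) := by
    rw [step1, Finset.sum_mul]
    refine Finset.sum_congr rfl fun c _ => ?_
    rw [Finset.mul_sum, Finset.sum_eq_single c]
    · rw [mul_smul_comm, ← mul_kronecker_mul, hmul c c, if_pos rfl]
    · intro c' _ hne
      rw [mul_smul_comm, ← mul_kronecker_mul, hmul c c', if_neg (Ne.symm hne)]
      simp [zero_kronecker]
    · intro h; exact absurd (Finset.mem_univ c) h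
  have hWH : (∑ c, P c ⊗ₖ Wb c)ᴴ = ∑ c, P c ⊗ₖ (Wb c)ᴴ := by
    rw [conjTranspose_sum]
    refine Finset.sum_congr rfl fun c _ => ?_
    rw [kron_conjT, show (P c)ᴴ = P c from proj_herm v c]
  rw [step2, hWH, Finset.sum_mul]
  refine Finset.sum_congr rfl fun c _ => ?_
  rw [smul_mul_assoc, Finset.mul_sum, Finset.sum_eq_single c]
  · rw [← mul_kronecker_mul, hmul c c, if_pos rfl]
  · intro c' _ hne
    rw [← mul_kronecker_mul, hmul c c', if_neg (Ne.symm hne), zero_kronecker]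
  · intro h; exact absurd (Finset.mem_univ c) h

lemma X_diag (a n N : ℕ) :
    embezState a n N ⊗ₖ (Matrix.of (fun z z' : Fin a =>
        if (z : ℕ) = 0 ∧ (z' : ℕ) = 0 then (1:ℂ) else 0))
    = Matrix.diagonal (fun s : Fin N × Fin a =>
        if (s.2 : ℕ) = 0 ∧ a ≤ (s.1 : ℕ) ∧ (s.1 : ℕ) ≤ n then
          ((1 / (((s.1 : ℕ) : ℝ) * harmSum a n) : ℝ) : ℂ) else 0) := by
  ext ⟨i, z⟩ ⟨i', z'⟩
  simp only [kroneckerMap_apply, embezState, Matrix.of_apply, Matrix.diagonal_apply,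
    Prod.mk.injEq]
  by_cases hii : i = i'
  · subst hii
    by_cases hz : (z:ℕ) = 0
    · by_cases hz' : (z':ℕ) = 0
      · have : z = z' := Fin.ext (hz.trans hz'.symm)
        subst this
        simp [hz]
      · have hne : z ≠ z' := fun h => hz' (h ▸ hz)
        simp [hz, hz', hne]
    · simp [hz]
  · simp [hii]

lemma sum_fin_ite {α : Type*} [AddCommMonoid α] {N : ℕ} (m : ℕ) (f : Fin N → α) :
    ∑ i : Fin N, (if m = (i : ℕ) then f i else 0)
      = if h : m < N then f ⟨m, h⟩ else 0 := by
  split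
  · next h =>
    rw [Finset.sum_eq_single (⟨m, h⟩ : Fin N)]
    · simp
    · intro i _ hne
      rw [if_neg]
      intro he
      exact hne (Fin.ext he.symm)
    · intro hmem; exact absurd (Finset.mem_univ _) hmem
  · next h =>
    apply Finset.sum_eq_zero
    intro i _
    rw [if_neg]
    intro he
    exact h (he ▸ i.isLt)

end Aux

set_option maxHeartbeats 1600000 in
/-- Coherent flattening via embezzlement, first inequality:
`W (ρ ⊗ ξ_{a:n} ⊗ |0⟩⟨0|) W* ≼ (1+15δ) · (γ/d) ∑_c |v_c⟩⟨v_c| ⊗ ξ_{1:n} ⊗ ∑_{e<b(c)} |e⟩⟨e|`. -/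
theorem flatten_embezzle_first {I : Type*} [Fintype I] [DecidableEq I] [Nonempty I]
    (δ γ : ℝ) (hδ0 : 0 < δ) (hδ : δ < 1 / 15) (hγ0 : 0 < γ) (hγ1 : γ < 1)
    (d : ℕ) (hd : 0 < d) (dγ : ℕ) (hdγ : (dγ : ℝ) = (d : ℝ) / γ)
    (q : I → ℝ) (hq : ∀ c, 0 < q c)
    (v : I → Fin d → ℂ)
    (hv : ∀ c c' : I, ∑ i, (starRingEnd ℂ) (v c i) * v c' i = if c = c' then 1 else 0)
    (hρ : IsDensityMatrix (∑ c, ((q c : ℝ) : ℂ) • Matrix.vecMulVec (v c) (star (v c))))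
    (b : I → ℕ) (hbpos : ∀ c, 0 < b c) (hb : ∀ c, ((b c : ℕ) : ℝ) = q c * d / γ)
    (a : ℕ) (ha : (a : ℝ) = ((d : ℝ) / γ) * (Finset.univ.sup' Finset.univ_nonempty q))
    (n N : ℕ) (hn : ((a : ℝ)) ^ ((1 : ℝ) / δ) ≤ (n : ℝ)) (hN : n ≤ N)
    (Wb : I → Matrix (Fin N × Fin a) (Fin N × Fin a) ℂ)
    (hWb : ∀ c, Wb c ∈ Matrix.unitaryGroup (Fin N × Fin a) ℂ)
    (hWcol : ∀ (c : I) (i : Fin N) (p : Fin N × Fin a) (z : Fin a), (z : ℕ) = 0 →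
      Wb c p (i, z) =
        if (p.1 : ℕ) = (i : ℕ) / b c ∧ (p.2 : ℕ) = (i : ℕ) % b c then 1 else 0) :
    ((((1 + 15 * δ : ℝ)) : ℂ) • (((γ / (d : ℝ) : ℝ) : ℂ) •
        ∑ c, Matrix.vecMulVec (v c) (star (v c)) ⊗ₖ
          (embezState 1 n N ⊗ₖ
            Matrix.of (fun z z' : Fin a => if z = z' ∧ (z : ℕ) < b c then 1 else 0)))
      - (∑ c, Matrix.vecMulVec (v c) (star (v c)) ⊗ₖ Wb c)
          * ((∑ c, ((q c : ℝ) : ℂ) • Matrix.vecMulVec (v c) (star (v c))) ⊗ₖ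
              (embezState a n N ⊗ₖ
                Matrix.of (fun z z' : Fin a =>
                  if (z : ℕ) = 0 ∧ (z' : ℕ) = 0 then 1 else 0)))
          * (∑ c, Matrix.vecMulVec (v c) (star (v c)) ⊗ₖ Wb c)ᴴ).PosSemidef := by
  classical
  -- numeric preliminaries
  have hd0 : (0:ℝ) < (d:ℝ) := by exact_mod_cast hd
  have hdγ0 : (0:ℝ) < (d:ℝ)/γ := by positivity
  have hqc : ∀ c, q c = (b c : ℝ) * γ / (d:ℝ) := by
    intro c
    rw [hb c]
    field_simp
  have hba : ∀ c, b c ≤ a := by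
    intro c
    have h1 : q c ≤ Finset.univ.sup' Finset.univ_nonempty q :=
      Finset.le_sup' q (Finset.mem_univ c)
    have : (b c:ℝ) ≤ (a:ℝ) := by
      rw [hb c, ha]
      calc q c * (d:ℝ) / γ = ((d:ℝ)/γ) * q c := by ring
      _ ≤ ((d:ℝ)/γ) * (Finset.univ.sup' Finset.univ_nonempty q) :=
        mul_le_mul_of_nonneg_left h1 (le_of_lt hdγ0)
    exact_mod_cast this
  have ha1 : 1 ≤ a := le_trans (hbpos (Classical.arbitrary I)) (hba _)
  have ha1' : (1:ℝ) ≤ (a:ℝ) := by exact_mod_cast ha1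
  have han : a ≤ n := by
    have h1 : (a:ℝ) = (a:ℝ) ^ ((1:ℝ)) := (Real.rpow_one _).symm
    have h2 : (a:ℝ) ^ ((1:ℝ)) ≤ (a:ℝ) ^ ((1:ℝ)/δ) :=
      Real.rpow_le_rpow_of_exponent_le ha1'
        (by rw [le_div_iff₀ hδ0]; nlinarith)
    have : (a:ℝ) ≤ (n:ℝ) := by
      calc (a:ℝ) = (a:ℝ) ^ ((1:ℝ)) := h1
      _ ≤ (a:ℝ) ^ ((1:ℝ)/δ) := h2
      _ ≤ (n:ℝ) := hn
    exact_mod_cast this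
  have hn1 : 1 ≤ n := le_trans ha1 han
  have hS1pos : 0 < harmSum 1 n := harmSum_pos le_rfl hn1
  have hSapos : 0 < harmSum a n := harmSum_pos ha1 han
  have hkey : harmSum 1 n ≤ (1 + 15*δ) * harmSum a n := harm_key hδ0 hδ ha1 han hn
  have apos : 0 < a := ha1
  -- rewrite the conjugated middle term
  rw [W_rho_W v hv q Wb (embezState a n N ⊗ₖ Matrix.of (fun z z' : Fin a =>
      if (z : ℕ) = 0 ∧ (z' : ℕ) = 0 then (1:ℂ) else 0))]
  set α : ℂ := ((1 + 15 * δ : ℝ) : ℂ) with hα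
  set β : ℂ := ((γ / (d : ℝ) : ℝ) : ℂ) with hβ
  set P : I → Matrix (Fin d) (Fin d) ℂ := fun c => vecMulVec (v c) (star (v c)) with hPdef
  set Y : I → Matrix (Fin N × Fin a) (Fin N × Fin a) ℂ := fun c =>
    embezState 1 n N ⊗ₖ Matrix.of (fun z z' : Fin a =>
      if z = z' ∧ (z : ℕ) < b c then (1:ℂ) else 0) with hYdef
  set Z : I → Matrix (Fin N × Fin a) (Fin N × Fin a) ℂ := fun c =>
    Wb c * (embezState a n N ⊗ₖ Matrix.of (fun z z' : Fin a =>
      if (z : ℕ) = 0 ∧ (z' : ℕ) = 0 then (1:ℂ) else 0)) * (Wb c)ᴴ with hZdef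
  have hsplit : (α • (β • ∑ c, P c ⊗ₖ Y c) - ∑ c, ((q c:ℝ):ℂ) • (P c ⊗ₖ Z c))
      = ∑ c, P c ⊗ₖ ((α * β) • Y c - ((q c:ℝ):ℂ) • Z c) := by
    rw [Finset.smul_sum, Finset.smul_sum, ← Finset.sum_sub_distrib]
    refine Finset.sum_congr rfl fun c _ => ?_
    rw [smul_smul]
    ext ⟨i,k⟩ ⟨j,l⟩
    simp only [kroneckerMap_apply, Matrix.sub_apply, Matrix.smul_apply, smul_eq_mul]
    ring
  rw [hsplit]
  -- each summand is PSD
  apply Finset.sum_induction _ Matrix.PosSemidef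
    (fun A B hA hB => hA.add hB) Matrix.PosSemidef.zero
  intro c _
  refine posSemidef_kron (posSemidef_vecMulVec (v c)) ?_
  -- analyse D := (α*β) • Y c - q c • Z c
  set xC : Fin N × Fin a → ℂ := fun s =>
    if (s.2 : ℕ) = 0 ∧ a ≤ (s.1 : ℕ) ∧ (s.1 : ℕ) ≤ n then
      ((1 / (((s.1 : ℕ) : ℝ) * harmSum a n) : ℝ) : ℂ) else 0 with hxC
  have hZc : Z c = Wb c * Matrix.diagonal xC * (Wb c)ᴴ := by
    rw [hZdef]
    simp only
    rw [X_diag a n N]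
  have hZent : ∀ p p' : Fin N × Fin a, Z c p p' =
      ∑ s : Fin N × Fin a,
        (if ((p.1:ℕ) = (s.1:ℕ)/b c ∧ (p.2:ℕ) = (s.1:ℕ)%b c) ∧
            ((p'.1:ℕ) = (s.1:ℕ)/b c ∧ (p'.2:ℕ) = (s.1:ℕ)%b c) then xC s else 0) := by
    intro p p'
    rw [hZc, Matrix.mul_apply]
    refine Finset.sum_congr rfl fun s _ => ?_
    rw [Matrix.mul_diagonal, Matrix.conjTranspose_apply]
    obtain ⟨i, z⟩ := s
    by_cases h0 : (z:ℕ) = 0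
    · rw [hWcol c i p z h0, hWcol c i p' z h0]
      by_cases hA : (p.1:ℕ) = (i:ℕ)/b c ∧ (p.2:ℕ) = (i:ℕ)%b c
      · by_cases hB : (p'.1:ℕ) = (i:ℕ)/b c ∧ (p'.2:ℕ) = (i:ℕ)%b c
        · simp [hA, hB]
        · simp [hA, hB]
      · simp [hA]
    · have hx0 : xC (i,z) = 0 := by simp [hxC, h0]
      simp [hx0]
  -- D is a diagonal matrix
  set D := (α * β) • Y c - ((q c:ℝ):ℂ) • Z c with hD
  have hDdiag : D = Matrix.diagonal (fun p => D p p) := by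
    ext p p'
    by_cases hpp : p = p'
    · subst hpp; rw [Matrix.diagonal_apply_eq]
    · rw [Matrix.diagonal_apply_ne _ hpp]
      have hcomp : p.1 ≠ p'.1 ∨ p.2 ≠ p'.2 := by
        by_contra hcon
        push_neg at hcon
        exact hpp (Prod.ext hcon.1 hcon.2)
      have hY0 : Y c p p' = 0 := by
        rw [hYdef]
        simp only [kroneckerMap_apply, Matrix.of_apply, embezState]
        rcases hcomp with h | h
        · have h' : ¬(p.1 = p'.1 ∧ 1 ≤ (p.1:ℕ) ∧ (p.1:ℕ) ≤ n) := fun hh => h hh.1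
          rw [if_neg h', zero_mul]
        · have h' : ¬(p.2 = p'.2 ∧ (p.2:ℕ) < b c) := fun hh => h hh.1
          rw [if_neg h', mul_zero]
      have hZ0 : Z c p p' = 0 := by
        rw [hZent p p']
        apply Finset.sum_eq_zero
        intro s _
        rw [if_neg]
        rintro ⟨⟨h1, h2⟩, h3, h4⟩
        exact hpp (Prod.ext (Fin.ext (h1.trans h3.symm)) (Fin.ext (h2.trans h4.symm)))
      rw [hD]
      simp [Matrix.sub_apply, Matrix.smul_apply, hY0, hZ0]
  rw [hDdiag]
  rw [Matrix.posSemidef_diagonal_iff]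
  intro p
  obtain ⟨j, e⟩ := p
  -- real versions of the entries
  set Sa := harmSum a n with hSa
  set S1 := harmSum 1 n with hS1
  have hYval : Y c (j,e) (j,e) =
      (((if 1 ≤ (j:ℕ) ∧ (j:ℕ) ≤ n then 1/((j:ℕ) * S1) else 0) *
        (if (e:ℕ) < b c then 1 else 0) : ℝ) : ℂ) := by
    rw [hYdef]
    simp only [kroneckerMap_apply, Matrix.of_apply, embezState]
    by_cases h1 : 1 ≤ (j:ℕ) ∧ (j:ℕ) ≤ n <;> by_cases h2 : (e:ℕ) < b c <;>
        simp [h1, h2, hS1] <;> push_cast <;> ring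
  -- real version of Z's diagonal entry
  set xr : Fin N × Fin a → ℝ := fun s =>
    if (s.2 : ℕ) = 0 ∧ a ≤ (s.1 : ℕ) ∧ (s.1 : ℕ) ≤ n then
      1 / (((s.1 : ℕ) : ℝ) * Sa) else 0 with hxr
  set zr : ℝ := ∑ s : Fin N × Fin a,
      (if (j:ℕ) = (s.1:ℕ)/b c ∧ (e:ℕ) = (s.1:ℕ)%b c then xr s else 0) with hzr
  have hZval : Z c (j,e) (j,e) = ((zr : ℝ) : ℂ) := by
    rw [hZent (j,e) (j,e), hzr]
    rw [Complex.ofReal_sum]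
    refine Finset.sum_congr rfl fun s _ => ?_
    rw [apply_ite Complex.ofReal, Complex.ofReal_zero]
    simp only [and_self]
    by_cases hc' : (j:ℕ) = (s.1:ℕ)/b c ∧ (e:ℕ) = (s.1:ℕ)%b c
    · rw [if_pos hc', if_pos hc', hxC, hxr]
      simp only
      rw [apply_ite Complex.ofReal, Complex.ofReal_zero]
    · rw [if_neg hc', if_neg hc']
  -- evaluate zr
  have hzr_eval : zr = if (e:ℕ) < b c then
      (if h : (e:ℕ) + b c * (j:ℕ) < N then
        (if a ≤ (e:ℕ) + b c * (j:ℕ) ∧ (e:ℕ) + b c * (j:ℕ) ≤ n then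
          1 / ((((e:ℕ) + b c * (j:ℕ) : ℕ) : ℝ) * Sa) else 0)
       else 0) else 0 := by
    have hstep1 : zr = ∑ i : Fin N,
        (if (j:ℕ) = (i:ℕ)/b c ∧ (e:ℕ) = (i:ℕ)%b c then
          (if a ≤ (i:ℕ) ∧ (i:ℕ) ≤ n then 1 / (((i:ℕ):ℝ) * Sa) else 0) else 0) := by
      rw [hzr, Fintype.sum_prod_type]
      refine Finset.sum_congr rfl fun i _ => ?_
      by_cases hc' : (j:ℕ) = (i:ℕ)/b c ∧ (e:ℕ) = (i:ℕ)%b c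
      · simp only [hc', if_true]
        rw [Finset.sum_eq_single (⟨0, apos⟩ : Fin a)]
        · simp [hxr]
        · intro z _ hz
          have : (z:ℕ) ≠ 0 := fun h => hz (Fin.ext h)
          simp [hxr, this]
        · intro hmem; exact absurd (Finset.mem_univ _) hmem
      · simp [hc']
    have hcond : ∀ i : ℕ, ((j:ℕ) = i/b c ∧ (e:ℕ) = i%b c)
        ↔ ((e:ℕ) + b c * (j:ℕ) = i ∧ (e:ℕ) < b c) := by
      intro i
      constructor
      · rintro ⟨h1, h2⟩
        exact (Nat.div_mod_unique (hbpos c)).mp ⟨h1.symm, h2.symm⟩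
      · intro h
        obtain ⟨h1, h2⟩ := (Nat.div_mod_unique (hbpos c)).mpr h
        exact ⟨h1.symm, h2.symm⟩
    simp_rw [hstep1, hcond]
    by_cases he : (e:ℕ) < b c
    · simp only [he, and_true, if_true]
      rw [sum_fin_ite ((e:ℕ) + b c * (j:ℕ))
        (fun i : Fin N => if a ≤ (i:ℕ) ∧ (i:ℕ) ≤ n then 1 / (((i:ℕ):ℝ) * Sa) else 0)]
    · simp [he]
  -- the entry of D
  have hDent : D (j,e) (j,e) = α * β * Y c (j,e) (j,e) - ((q c:ℝ):ℂ) * Z c (j,e) (j,e) := by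
    rw [hD]
    simp [Matrix.sub_apply, Matrix.smul_apply, smul_eq_mul, mul_assoc]
  rw [hDent, hYval, hZval, hα, hβ]
  have hcast : ((1 + 15 * δ : ℝ) : ℂ) * ((γ / (d:ℝ) : ℝ) : ℂ) *
        (((if 1 ≤ (j:ℕ) ∧ (j:ℕ) ≤ n then 1/((j:ℕ) * S1) else 0) *
          (if (e:ℕ) < b c then 1 else 0) : ℝ) : ℂ) - ((q c:ℝ):ℂ) * ((zr:ℝ):ℂ)
      = (((1 + 15 * δ) * (γ / (d:ℝ)) *
          ((if 1 ≤ (j:ℕ) ∧ (j:ℕ) ≤ n then 1/((j:ℕ) * S1) else 0) *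
           (if (e:ℕ) < b c then 1 else 0)) - q c * zr : ℝ) : ℂ) := by
    push_cast
    ring
  rw [hcast, Complex.zero_le_real, sub_nonneg]
  -- now a purely real inequality
  have hF : 0 ≤ (if 1 ≤ (j:ℕ) ∧ (j:ℕ) ≤ n then 1/(((j:ℕ):ℝ) * S1) else 0) := by
    split
    · exact div_nonneg zero_le_one (mul_nonneg (Nat.cast_nonneg _) (le_of_lt hS1pos))
    · exact le_rfl
  rw [hzr_eval]
  by_cases he : (e:ℕ) < b c
  · simp only [if_pos he, mul_one]
    by_cases hm : (e:ℕ) + b c * (j:ℕ) < N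
    · simp only [dif_pos hm]
      by_cases hrange : a ≤ (e:ℕ) + b c * (j:ℕ) ∧ (e:ℕ) + b c * (j:ℕ) ≤ n
      · simp only [if_pos hrange]
        -- main case
        set m : ℕ := (e:ℕ) + b c * (j:ℕ) with hm'
        have hj1 : 1 ≤ (j:ℕ) := by
          rcases Nat.eq_zero_or_pos (j:ℕ) with h | h
          · exfalso
            have hme : m = (e:ℕ) := by rw [hm', h, Nat.mul_zero, Nat.add_zero]
            have h1 : a ≤ (e:ℕ) := hme ▸ hrange.1
            have h2 : (e:ℕ) < a := lt_of_lt_of_le he (hba c)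
            omega
          · exact h
        have hjn : (j:ℕ) ≤ n := by
          have h1 : (j:ℕ) ≤ b c * (j:ℕ) := Nat.le_mul_of_pos_left _ (hbpos c)
          have h2 : b c * (j:ℕ) ≤ m := Nat.le_add_left _ _
          exact le_trans h1 (le_trans h2 hrange.2)
        rw [if_pos ⟨hj1, hjn⟩]
        -- real inequality
        have hm1 : (1:ℝ) ≤ (m:ℝ) := by
          have : 1 ≤ m := le_trans ha1 hrange.1
          exact_mod_cast this
        have hj1' : (1:ℝ) ≤ ((j:ℕ):ℝ) := by exact_mod_cast hj1
        have hB1 : (1:ℝ) ≤ ((b c:ℕ):ℝ) := by exact_mod_cast hbpos c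
        have hbjm : ((b c:ℕ):ℝ) * ((j:ℕ):ℝ) ≤ (m:ℝ) := by
          have : b c * (j:ℕ) ≤ m := Nat.le_add_left _ _
          exact_mod_cast this
        have hkey' : S1 ≤ (1 + 15*δ) * Sa := by rw [hS1, hSa]; exact hkey
        have hS1pos' : 0 < S1 := by rw [hS1]; exact hS1pos
        have hSapos' : 0 < Sa := by rw [hSa]; exact hSapos
        have hdiv : ((b c:ℕ):ℝ) / ((m:ℝ) * Sa) ≤ (1 + 15*δ) / (((j:ℕ):ℝ) * S1) := by
          rw [div_le_div_iff₀ (by nlinarith) (by nlinarith)]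
          nlinarith [mul_le_mul_of_nonneg_right hbjm (le_of_lt hS1pos'),
            mul_le_mul_of_nonneg_left hkey' (by linarith : (0:ℝ) ≤ (m:ℝ))]
        rw [hqc c]
        calc (b c:ℝ) * γ / (d:ℝ) * (1 / ((m:ℝ) * Sa))
            = (γ/(d:ℝ)) * ((b c:ℝ) / ((m:ℝ) * Sa)) := by ring
          _ ≤ (γ/(d:ℝ)) * ((1 + 15*δ) / (((j:ℕ):ℝ) * S1)) :=
              mul_le_mul_of_nonneg_left hdiv (by positivity)
          _ = (1 + 15*δ) * (γ/(d:ℝ)) * (1/(((j:ℕ):ℝ) * S1)) := by ring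
      · simp only [if_neg hrange, mul_zero]
        exact mul_nonneg (by positivity) hF
    · simp only [dif_neg hm, mul_zero]
      exact mul_nonneg (by positivity) hF
  · simp only [if_neg he, mul_zero]
    simpa using mul_nonneg (mul_nonneg (by positivity : (0:ℝ) ≤ (1+15*δ)*(γ/(d:ℝ))) hF) (le_refl (0:ℝ))
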